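/- Let ℍ be a hypergraph on [n]. For every acyclic orientation A of ℍ there exists a permutation π of [n] such that O_π = A; that is, the map π ↦ O_π is a surjection from permutations of [n] onto acyclic orientations of ℍ. -/

import Mathlib

lemma transGen_chain {α : Type*} {r : α → α → Prop} {a b : α}
    (h : Relation.TransGen r a b) :
    ∃ (k : ℕ) (f : ℕ → α), 1 ≤ k ∧ f 0 = a ∧ f k = b ∧ ∀ t < k, r (f t) (f (t + 1)) := by
  induction h with
  | @single c hac =>
      exact ⟨1, fun t => if t = 0 then a else c, le_refl 1, by simp, by simp, by
        intro t ht
        interval_cases t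
        simpa using hac⟩
  | @tail b c hab hbc ih =>
      obtain ⟨k, f, hk, h0, hkb, hstep⟩ := ih
      refine ⟨k + 1, fun t => if t ≤ k then f t else c, by omega, by simp [h0], by simp, ?_⟩
      intro t ht
      rcases lt_or_eq_of_le (Nat.lt_succ_iff.mp ht) with h | h
      · simpa [Nat.le_of_lt h, Nat.succ_le_of_lt h] using hstep t h
      · subst h
        simpa [hkb] using hbc


/-- `ℍ` is a hypergraph on `[n]` (vertices modeled by `Fin n`):
it contains every singleton. -/
def IsHypergraph (n : ℕ) (ℍ : Finset (Finset (Fin n))) : Prop :=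
  ∀ i : Fin n, ({i} : Finset (Fin n)) ∈ ℍ

/-- An orientation of `ℍ` assigns to each hyperedge `H ∈ ℍ` a source `A H ∈ H`. -/
def IsOrientation {n : ℕ} {ℍ : Finset (Finset (Fin n))}
    (A : {H // H ∈ ℍ} → Fin n) : Prop :=
  ∀ H : {H // H ∈ ℍ}, A H ∈ H.1

/-- An orientation `A` is acyclic if there are no hyperedges `H_1, …, H_k ∈ ℍ` with
`k ≥ 2` such that `A (H_{t+1}) ∈ H_t \ {A (H_t)}` for all `t ∈ [k-1]` and
`A (H_1) ∈ H_k \ {A (H_k)}` (indexed from `0` below). -/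
def IsAcyclic {n : ℕ} {ℍ : Finset (Finset (Fin n))}
    (A : {H // H ∈ ℍ} → Fin n) : Prop :=
  ¬ ∃ (k : ℕ) (Hs : ℕ → {H // H ∈ ℍ}), 2 ≤ k ∧
      (∀ t, t + 1 < k → A (Hs (t + 1)) ∈ (Hs t).1 ∧ A (Hs (t + 1)) ≠ A (Hs t)) ∧
      A (Hs 0) ∈ (Hs (k - 1)).1 ∧ A (Hs 0) ≠ A (Hs (k - 1))

/-- The distinct orientations `A ≠ B` of `ℍ` are related by an increasing flip
between `i` and `j` (`i < j`): (a) if `A H ≠ B H` then `A H = i` and `B H = j`, and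
(b) if `{i, j} ⊆ H` then `A H = i ↔ B H = j`. -/
def IsFlip {n : ℕ} {ℍ : Finset (Finset (Fin n))}
    (A B : {H // H ∈ ℍ} → Fin n) (i j : Fin n) : Prop :=
  i < j ∧ A ≠ B ∧ ∀ H : {H // H ∈ ℍ},
    (A H ≠ B H → A H = i ∧ B H = j) ∧
    (i ∈ H.1 → j ∈ H.1 → (A H = i ↔ B H = j))

/-- `[h 0, …, h m]` is a path of length `m` in the orientation `A`:
for each `t < m` there is `H ∈ ℍ` with `A H = h t` and `h (t+1) ∈ H`. -/
def IsPath {n : ℕ} {ℍ : Finset (Finset (Fin n))}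
    (A : {H // H ∈ ℍ} → Fin n) (m : ℕ) (h : ℕ → Fin n) : Prop :=
  ∀ t < m, ∃ H : {H // H ∈ ℍ}, A H = h t ∧ h (t + 1) ∈ H.1

/-- The orientation `O_π` associated with a permutation `π` of `[n]`:
`O_π H = π (min {k : π k ∈ H})`, i.e. the first element of `H` in the list
`π 0, π 1, …` (junk value `0` for empty `H`). -/
def Opi {n : ℕ} [NeZero n] (π : Equiv.Perm (Fin n)) (H : Finset (Fin n)) : Fin n :=
  if h : (Finset.univ.filter fun k => π k ∈ H).Nonempty then
    π ((Finset.univ.filter fun k => π k ∈ H).min' h)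
  else 0

/-- Every acyclic orientation `A` of `ℍ` is of the form `O_π` for some
permutation `π` of `[n]`: the map `π ↦ O_π` is surjective onto acyclic
orientations. -/
theorem Opi_surjective
    (n : ℕ) [NeZero n] (ℍ : Finset (Finset (Fin n))) (hℍ : IsHypergraph n ℍ)
    (A : {H // H ∈ ℍ} → Fin n)
    (hAor : IsOrientation A) (hAac : IsAcyclic A) :
    ∃ π : Equiv.Perm (Fin n), ∀ H : {H // H ∈ ℍ}, Opi π H.1 = A H := by
  classical
  -- the step relation
  set r : Fin n → Fin n → Prop :=
    fun i j => ∃ H : {H // H ∈ ℍ}, A H = i ∧ j ∈ H.1 ∧ j ≠ i with hr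
  -- no cycles
  have hirr : ∀ i, ¬ Relation.TransGen r i i := by
    intro i hi
    obtain ⟨k, f, hk, h0, hki, hstep⟩ := transGen_chain hi
    rcases eq_or_lt_of_le hk with h1 | h2
    · obtain ⟨H, hH1, hH2, hH3⟩ := hstep 0 (by omega)
      rw [h0] at hH1 hH3
      rw [show (0:ℕ)+1 = k by omega, hki] at hH3
      exact hH3 rfl
    · -- k ≥ 2 : build the cycle
      have hstep' : ∀ t < k, ∃ H : {H // H ∈ ℍ},
          A H = f t ∧ f (t + 1) ∈ H.1 ∧ f (t + 1) ≠ f t := hstep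
      set Hs : ℕ → {H // H ∈ ℍ} := fun t =>
        if ht : t < k then Classical.choose (hstep' t ht)
        else Classical.choose (hstep' 0 (by omega)) with hHs
      have hSpec : ∀ t (ht : t < k),
          A (Hs t) = f t ∧ f (t + 1) ∈ (Hs t).1 ∧ f (t + 1) ≠ f t := by
        intro t ht
        simp only [hHs, dif_pos ht]
        exact Classical.choose_spec (hstep' t ht)
      apply hAac
      refine ⟨k, Hs, h2, ?_, ?_, ?_⟩
      · intro t ht
        obtain ⟨ha, hb, hc⟩ := hSpec t (by omega)
        obtain ⟨ha', hb', hc'⟩ := hSpec (t + 1) ht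
        rw [ha, ha']
        exact ⟨hb, hc⟩
      · obtain ⟨ha, hb, hc⟩ := hSpec (k - 1) (by omega)
        obtain ⟨ha', _, _⟩ := hSpec 0 (by omega)
        rw [ha', h0, ← hki, show k - 1 + 1 = k by omega] at *
        exact hb
      · obtain ⟨ha, hb, hc⟩ := hSpec (k - 1) (by omega)
        obtain ⟨ha', _, _⟩ := hSpec 0 (by omega)
        rw [ha', ha, h0, ← hki, show k - 1 + 1 = k by omega] at *
        exact hc
  -- the reflexive transitive closure is a partial order
  have hpo : IsPartialOrder (Fin n) (Relation.ReflTransGen r) := by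
    refine { refl := fun a => Relation.ReflTransGen.refl,
             trans := fun a b c hab hbc => hab.trans hbc,
             antisymm := ?_ }
    · intro a b hab hba
      by_contra hne
      rcases (Relation.reflTransGen_iff_eq_or_transGen.mp hab) with h | h
      · exact hne h.symm
      rcases (Relation.reflTransGen_iff_eq_or_transGen.mp hba) with h' | h'
      · exact hne h'
      exact hirr a (h.trans h')
  obtain ⟨s, hls, hrs⟩ := @extend_partialOrder (Fin n) (Relation.ReflTransGen r) hpo
  haveI := hls.toIsPartialOrder
  haveI := hls.toTotal
  haveI : DecidableRel s := fun a b => Classical.dec _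
  have hs_of_r : ∀ i j, r i j → s i j := fun i j h =>
    hrs _ _ (Relation.ReflTransGen.single h)
  -- sort the vertices
  set l : List (Fin n) := Finset.univ.sort s with hl
  have hlen : l.length = n := by
    simp [hl, Finset.length_sort]
  have hnodup : l.Nodup := Finset.sort_nodup _ s
  have hsorted : List.Pairwise s l := Finset.pairwise_sort _ s
  set g : Fin n → Fin n := fun k => l.get (Fin.cast hlen.symm k) with hg
  have hginj : Function.Injective g := by
    intro a b hab
    have h2 := congrArg Fin.val ((List.nodup_iff_injective_get.mp hnodup) hab)
    exact Fin.ext (by simpa using h2)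
  set π : Equiv.Perm (Fin n) :=
    Equiv.ofBijective g (Finite.injective_iff_bijective.mp hginj) with hπ
  have hπapp : ∀ k, π k = g k := fun k => rfl
  -- sorted means s-monotone
  have hmono : ∀ a b : Fin n, a < b → s (π a) (π b) := by
    intro a b hab
    have := List.pairwise_iff_get.mp hsorted (Fin.cast hlen.symm a) (Fin.cast hlen.symm b)
      (by exact hab)
    exact this
  refine ⟨π, ?_⟩
  intro H
  simp only [Opi]
  obtain ⟨k₁, hk₁⟩ := π.surjective (A H)
  have hmemA : A H ∈ H.1 := hAor H
  have hne : (Finset.univ.filter fun k => π k ∈ H.1).Nonempty :=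
    ⟨k₁, by simp [hk₁, hmemA]⟩
  rw [dif_pos hne]
  set k₀ := (Finset.univ.filter fun k => π k ∈ H.1).min' hne with hk₀
  have hk₀mem : π k₀ ∈ H.1 := by
    have := Finset.min'_mem _ hne
    simpa [hk₀] using (Finset.mem_filter.mp this).2
  have hle : k₀ ≤ k₁ := Finset.min'_le _ _ (by simp [hk₁, hmemA])
  by_contra hneq
  -- then r (A H) (π k₀) but π k₀ comes earlier: contradiction with antisymmetry
  have hr0 : r (A H) (π k₀) := ⟨H, rfl, hk₀mem, fun h => hneq (h ▸ rfl)⟩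
  have hlt : k₀ < k₁ := lt_of_le_of_ne hle (fun h => hneq (by rw [h, hk₁]))
  have h1 : s (π k₀) (π k₁) := hmono _ _ hlt
  have h2 : s (π k₁) (π k₀) := hk₁ ▸ hs_of_r _ _ hr0
  have := _root_.antisymm h1 h2
  rw [hk₁] at this
  exact hneq this
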